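/- Sufficiency in the Pietsch domination theorem for positive (p₁,…,p_m;r)-dominated operators: let 1 ≤ r, p, p₁,…,p_m < ∞ with 1/p = 1/p₁ + ⋯ + 1/p_m + 1/r, and let T ∈ L(E₁,…,E_m;F). If there exist C > 0, Borel probability measures μ_j on B_{E_j*}⁺ (1 ≤ j ≤ m) and μ_{m+1} on B_{F**}⁺ such that |⟨T(x¹,…,x^m), y*⟩| ≤ C ∏_j (∫ ⟨x^j, φ_j⟩^{p_j} dμ_j)^{1/p_j} (∫ ⟨y*, ψ⟩^r dμ_{m+1})^{1/r} for all x^j ∈ E_j⁺ and y* ∈ F*⁺, then T is positive (p₁,…,p_m;r)-dominated with d⁺_{(p₁,…,p_m;r)}(T) ≤ C. -/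

import Mathlib

open MeasureTheory

/-- The positive part of the dual unit ball, with the weak-* topology. -/
def PosDualBall (E : Type*) [NormedAddCommGroup E] [Lattice E] [HasSolidNorm E] [IsOrderedAddMonoid E] [NormedSpace ℝ E] : Type _ :=
  {φ : WeakDual ℝ E // (∀ x : E, |φ x| ≤ ‖x‖) ∧ ∀ x : E, 0 ≤ x → 0 ≤ φ x}

instance (E : Type*) [NormedAddCommGroup E] [Lattice E] [HasSolidNorm E] [IsOrderedAddMonoid E] [NormedSpace ℝ E] :
    TopologicalSpace (PosDualBall E) :=
  inferInstanceAs (TopologicalSpace (Subtype _))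

noncomputable instance (E : Type*) [NormedAddCommGroup E] [Lattice E] [HasSolidNorm E] [IsOrderedAddMonoid E] [NormedSpace ℝ E] :
    MeasurableSpace (PosDualBall E) := borel _

/-- The positive part of the bidual unit ball, with the weak-* topology. -/
def PosBidualBall (F : Type*) [NormedAddCommGroup F] [Lattice F] [HasSolidNorm F] [IsOrderedAddMonoid F] [NormedSpace ℝ F] : Type _ :=
  {ψ : WeakDual ℝ (F →L[ℝ] ℝ) // (∀ φ : F →L[ℝ] ℝ, |ψ φ| ≤ ‖φ‖) ∧
    ∀ φ : F →L[ℝ] ℝ, (∀ y, 0 ≤ y → 0 ≤ φ y) → 0 ≤ ψ φ}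

instance (F : Type*) [NormedAddCommGroup F] [Lattice F] [HasSolidNorm F] [IsOrderedAddMonoid F] [NormedSpace ℝ F] :
    TopologicalSpace (PosBidualBall F) :=
  inferInstanceAs (TopologicalSpace (Subtype _))

noncomputable instance (F : Type*) [NormedAddCommGroup F] [Lattice F] [HasSolidNorm F] [IsOrderedAddMonoid F] [NormedSpace ℝ F] :
    MeasurableSpace (PosBidualBall F) := borel _

/-- The weak `ℓ_p` norm of a finite positive family, over the positive dual unit ball. -/
noncomputable def wnormPos {E : Type*} [NormedAddCommGroup E] [Lattice E] [HasSolidNorm E] [IsOrderedAddMonoid E] [NormedSpace ℝ E]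
    (p : ℝ) {n : ℕ} (x : Fin n → E) : ℝ :=
  sSup {s : ℝ | ∃ φ : E →L[ℝ] ℝ, ‖φ‖ ≤ 1 ∧ (∀ y, 0 ≤ y → 0 ≤ φ y) ∧
    s = (∑ i, (φ (x i)) ^ p) ^ (1 / p)}

/-- The weak `ℓ_r` norm of a finite positive family of functionals, over the positive
bidual unit ball. -/
noncomputable def wnormDualPos {F : Type*} [NormedAddCommGroup F] [Lattice F] [HasSolidNorm F] [IsOrderedAddMonoid F] [NormedSpace ℝ F]
    (r : ℝ) {n : ℕ} (y : Fin n → (F →L[ℝ] ℝ)) : ℝ :=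
  sSup {s : ℝ | ∃ ψ : (F →L[ℝ] ℝ) →L[ℝ] ℝ, ‖ψ‖ ≤ 1 ∧
    (∀ φ : F →L[ℝ] ℝ, (∀ z, 0 ≤ z → 0 ≤ φ z) → 0 ≤ ψ φ) ∧
    s = (∑ i, (ψ (y i)) ^ r) ^ (1 / r)}

/- ### Auxiliary lemmas -/

instance (E : Type*) [NormedAddCommGroup E] [Lattice E] [HasSolidNorm E] [IsOrderedAddMonoid E] [NormedSpace ℝ E] :
    BorelSpace (PosDualBall E) := ⟨rfl⟩

instance (F : Type*) [NormedAddCommGroup F] [Lattice F] [HasSolidNorm F] [IsOrderedAddMonoid F] [NormedSpace ℝ F] :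
    BorelSpace (PosBidualBall F) := ⟨rfl⟩

open Finset in
/-- Generalized finite Hölder inequality, derived from weighted AM-GM. -/
lemma holder_prod_aux {ι κ : Type*} [Fintype ι] [Fintype κ] (t : κ → ℝ) (ht : ∀ k, 0 < t k)
    (hts : ∑ k, t k = 1) (f : κ → ι → ℝ) (hf : ∀ k i, 0 ≤ f k i) :
    ∑ i, ∏ k, (f k i) ^ (t k) ≤ ∏ k, (∑ i, f k i) ^ (t k) := by
  by_cases hz : ∃ k₀, ∑ i, f k₀ i = 0
  · obtain ⟨k₀, hk₀⟩ := hz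
    have hf0 : ∀ i, f k₀ i = 0 := fun i =>
      (Finset.sum_eq_zero_iff_of_nonneg (fun i _ => hf k₀ i)).mp hk₀ i (mem_univ i)
    have hzero : ∀ i : ι, ∏ k, (f k i) ^ (t k) = 0 := by
      intro i
      apply Finset.prod_eq_zero (mem_univ k₀)
      rw [hf0 i, Real.zero_rpow (ht k₀).ne']
    rw [Finset.sum_congr rfl fun i _ => hzero i, Finset.sum_const_zero]
    exact Finset.prod_nonneg fun k _ => Real.rpow_nonneg (Finset.sum_nonneg fun i _ => hf k i) _
  · push_neg at hz
    have hS : ∀ k, 0 < ∑ i, f k i := fun k =>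
      lt_of_le_of_ne (Finset.sum_nonneg fun i _ => hf k i) (Ne.symm (hz k))
    have key : ∀ i : ι, ∏ k, (f k i) ^ (t k) ≤
        (∏ k, (∑ i', f k i') ^ (t k)) * ∑ k, t k * (f k i / ∑ i', f k i') := by
      intro i
      have h1 : ∏ k, (f k i) ^ (t k) =
          (∏ k, (∑ i', f k i') ^ (t k)) * ∏ k, (f k i / ∑ i', f k i') ^ (t k) := by
        rw [← Finset.prod_mul_distrib]
        refine Finset.prod_congr rfl fun k _ => ?_
        rw [Real.div_rpow (hf k i) (hS k).le]
        rw [mul_div_cancel₀]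
        exact (Real.rpow_pos_of_pos (hS k) _).ne'
      rw [h1]
      refine mul_le_mul_of_nonneg_left ?_
        (Finset.prod_nonneg fun k _ => Real.rpow_nonneg (hS k).le _)
      exact Real.geom_mean_le_arith_mean_weighted _ _ _ (fun k _ => (ht k).le) hts
        (fun k _ => div_nonneg (hf k i) (hS k).le)
    calc ∑ i, ∏ k, (f k i) ^ (t k)
        ≤ ∑ i : ι, (∏ k, (∑ i', f k i') ^ (t k)) * ∑ k, t k * (f k i / ∑ i', f k i') :=
          Finset.sum_le_sum fun i _ => key i
      _ = ∏ k, (∑ i', f k i') ^ (t k) := by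
          rw [← Finset.mul_sum, Finset.sum_comm]
          have h2 : ∀ k, ∑ i : ι, t k * (f k i / ∑ i', f k i') = t k := by
            intro k
            rw [← Finset.mul_sum, ← Finset.sum_div, div_self (hS k).ne', mul_one]
          rw [Finset.sum_congr rfl fun k _ => h2 k, hts, mul_one]

section wnormPosLemmas

variable {E : Type*} [NormedAddCommGroup E] [Lattice E] [HasSolidNorm E] [IsOrderedAddMonoid E] [NormedSpace ℝ E]
  {q : ℝ} {n : ℕ} {x : Fin n → E}

lemma wnormPos_set_bdd (hq : 0 < q) (hx : ∀ i, 0 ≤ x i) :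
    BddAbove {s : ℝ | ∃ φ : E →L[ℝ] ℝ, ‖φ‖ ≤ 1 ∧ (∀ y, 0 ≤ y → 0 ≤ φ y) ∧
      s = (∑ i, (φ (x i)) ^ q) ^ (1 / q)} := by
  refine ⟨(∑ i, ‖x i‖ ^ q) ^ (1 / q), ?_⟩
  rintro s ⟨φ, hφ1, hφ2, rfl⟩
  refine Real.rpow_le_rpow
    (Finset.sum_nonneg fun i _ => Real.rpow_nonneg (hφ2 _ (hx i)) _)
    (Finset.sum_le_sum fun i _ => ?_) (by positivity)
  refine Real.rpow_le_rpow (hφ2 _ (hx i)) ?_ hq.le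
  calc φ (x i) ≤ ‖φ (x i)‖ := Real.le_norm_self _
    _ ≤ ‖φ‖ * ‖x i‖ := φ.le_opNorm _
    _ ≤ 1 * ‖x i‖ := mul_le_mul_of_nonneg_right hφ1 (norm_nonneg _)
    _ = ‖x i‖ := one_mul _

lemma wnormPos_nonneg (hq : 0 < q) (hx : ∀ i, 0 ≤ x i) : 0 ≤ wnormPos q x := by
  refine le_csSup (wnormPos_set_bdd hq hx) ⟨0, by simp, fun y _ => le_refl 0, ?_⟩
  simp [Real.zero_rpow hq.ne', Real.zero_rpow (inv_ne_zero hq.ne')]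

lemma sum_integral_le_wnormPos (hq : 0 < q) (hx : ∀ i, 0 ≤ x i)
    (μ : Measure (PosDualBall E)) [IsProbabilityMeasure μ] :
    ∑ i, ∫ ω : PosDualBall E, (ω.1 (x i)) ^ q ∂μ ≤ (wnormPos q x) ^ q := by
  have hint : ∀ i, Integrable (fun ω : PosDualBall E => (ω.1 (x i)) ^ q) μ := by
    intro i
    have hc : Continuous (fun ω : PosDualBall E => (ω.1 (x i)) ^ q) :=
      (Real.continuous_rpow_const hq.le).comp
        ((WeakDual.eval_continuous (x i)).comp continuous_subtype_val)
    refine (integrable_const (‖x i‖ ^ q)).mono' hc.aestronglyMeasurable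
      (Filter.Eventually.of_forall fun ω => ?_)
    rw [Real.norm_eq_abs, abs_of_nonneg (Real.rpow_nonneg (ω.2.2 _ (hx i)) _)]
    exact Real.rpow_le_rpow (ω.2.2 _ (hx i)) ((le_abs_self _).trans (ω.2.1 _)) hq.le
  rw [← integral_finset_sum _ (fun i _ => hint i)]
  have hbound : ∀ ω : PosDualBall E, ∑ i, (ω.1 (x i)) ^ q ≤ (wnormPos q x) ^ q := by
    intro ω
    set φ : E →L[ℝ] ℝ := ω.1 with hφ
    have hφnorm : ‖φ‖ ≤ 1 := by
      refine ContinuousLinearMap.opNorm_le_bound φ zero_le_one fun v => ?_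
      rw [Real.norm_eq_abs, one_mul]
      exact ω.2.1 v
    have hmem : (∑ i, (φ (x i)) ^ q) ^ (1 / q) ≤ wnormPos q x :=
      le_csSup (wnormPos_set_bdd hq hx) ⟨φ, hφnorm, fun v hv => ω.2.2 v hv, rfl⟩
    have hsnn : 0 ≤ ∑ i, (φ (x i)) ^ q :=
      Finset.sum_nonneg fun i _ => Real.rpow_nonneg (ω.2.2 _ (hx i)) _
    have := Real.rpow_le_rpow (Real.rpow_nonneg hsnn _) hmem hq.le
    rwa [← Real.rpow_mul hsnn, one_div, inv_mul_cancel₀ hq.ne', Real.rpow_one] at this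
  calc ∫ ω, ∑ i, (ω.1 (x i)) ^ q ∂μ
      ≤ ∫ _ω : PosDualBall E, (wnormPos q x) ^ q ∂μ :=
        integral_mono (integrable_finset_sum _ fun i _ => hint i) (integrable_const _) hbound
    _ = (wnormPos q x) ^ q := by simp

end wnormPosLemmas

section wnormDualPosLemmas

variable {F : Type*} [NormedAddCommGroup F] [Lattice F] [HasSolidNorm F] [IsOrderedAddMonoid F] [NormedSpace ℝ F]
  {q : ℝ} {n : ℕ} {y : Fin n → (F →L[ℝ] ℝ)}

lemma wnormDualPos_set_bdd (hq : 0 < q) (hy : ∀ i, ∀ z, 0 ≤ z → 0 ≤ y i z) :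
    BddAbove {s : ℝ | ∃ ψ : (F →L[ℝ] ℝ) →L[ℝ] ℝ, ‖ψ‖ ≤ 1 ∧
      (∀ φ : F →L[ℝ] ℝ, (∀ z, 0 ≤ z → 0 ≤ φ z) → 0 ≤ ψ φ) ∧
      s = (∑ i, (ψ (y i)) ^ q) ^ (1 / q)} := by
  refine ⟨(∑ i, ‖y i‖ ^ q) ^ (1 / q), ?_⟩
  rintro s ⟨ψ, hψ1, hψ2, rfl⟩
  refine Real.rpow_le_rpow
    (Finset.sum_nonneg fun i _ => Real.rpow_nonneg (hψ2 _ (hy i)) _)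
    (Finset.sum_le_sum fun i _ => ?_) (by positivity)
  refine Real.rpow_le_rpow (hψ2 _ (hy i)) ?_ hq.le
  calc ψ (y i) ≤ ‖ψ (y i)‖ := Real.le_norm_self _
    _ ≤ ‖ψ‖ * ‖y i‖ := ψ.le_opNorm _
    _ ≤ 1 * ‖y i‖ := mul_le_mul_of_nonneg_right hψ1 (norm_nonneg _)
    _ = ‖y i‖ := one_mul _

lemma wnormDualPos_nonneg (hq : 0 < q) (hy : ∀ i, ∀ z, 0 ≤ z → 0 ≤ y i z) :
    0 ≤ wnormDualPos q y := by
  refine le_csSup (wnormDualPos_set_bdd hq hy) ⟨0, by rw [ContinuousLinearMap.opNorm_zero]; exact zero_le_one, fun φ _ => le_refl 0, ?_⟩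
  simp [Real.zero_rpow hq.ne', Real.zero_rpow (inv_ne_zero hq.ne')]

lemma sum_integral_le_wnormDualPos (hq : 0 < q) (hy : ∀ i, ∀ z, 0 ≤ z → 0 ≤ y i z)
    (ν : Measure (PosBidualBall F)) [IsProbabilityMeasure ν] :
    ∑ i, ∫ ψ : PosBidualBall F, (ψ.1 (y i)) ^ q ∂ν ≤ (wnormDualPos q y) ^ q := by
  have hint : ∀ i, Integrable (fun ψ : PosBidualBall F => (ψ.1 (y i)) ^ q) ν := by
    intro i
    have hc : Continuous (fun ψ : PosBidualBall F => (ψ.1 (y i)) ^ q) :=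
      (Real.continuous_rpow_const hq.le).comp
        ((WeakDual.eval_continuous (y i)).comp continuous_subtype_val)
    refine (integrable_const (‖y i‖ ^ q)).mono' hc.aestronglyMeasurable
      (Filter.Eventually.of_forall fun ψ => ?_)
    rw [Real.norm_eq_abs, abs_of_nonneg (Real.rpow_nonneg (ψ.2.2 _ (hy i)) _)]
    exact Real.rpow_le_rpow (ψ.2.2 _ (hy i)) ((le_abs_self _).trans (ψ.2.1 _)) hq.le
  rw [← integral_finset_sum _ (fun i _ => hint i)]
  have hbound : ∀ ψ : PosBidualBall F, ∑ i, (ψ.1 (y i)) ^ q ≤ (wnormDualPos q y) ^ q := by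
    intro ψ
    set Ψ : (F →L[ℝ] ℝ) →L[ℝ] ℝ := ψ.1 with hΨ
    have hΨnorm : ‖Ψ‖ ≤ 1 := by
      refine ContinuousLinearMap.opNorm_le_bound Ψ zero_le_one fun v => ?_
      rw [Real.norm_eq_abs, one_mul]
      exact ψ.2.1 v
    have hmem : (∑ i, (Ψ (y i)) ^ q) ^ (1 / q) ≤ wnormDualPos q y :=
      le_csSup (wnormDualPos_set_bdd hq hy) ⟨Ψ, hΨnorm, fun φ hφ => ψ.2.2 φ hφ, rfl⟩
    have hsnn : 0 ≤ ∑ i, (Ψ (y i)) ^ q :=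
      Finset.sum_nonneg fun i _ => Real.rpow_nonneg (ψ.2.2 _ (hy i)) _
    have := Real.rpow_le_rpow (Real.rpow_nonneg hsnn _) hmem hq.le
    rwa [← Real.rpow_mul hsnn, one_div, inv_mul_cancel₀ hq.ne', Real.rpow_one] at this
  calc ∫ ψ, ∑ i, (ψ.1 (y i)) ^ q ∂ν
      ≤ ∫ _ψ : PosBidualBall F, (wnormDualPos q y) ^ q ∂ν :=
        integral_mono (integrable_finset_sum _ fun i _ => hint i) (integrable_const _) hbound
    _ = (wnormDualPos q y) ^ q := by simp

end wnormDualPosLemmas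

/-- Sufficiency in the Pietsch domination theorem for positive `(p₁,…,p_m;r)`-dominated
operators: a Pietsch-type domination by probability measures on the positive dual
(resp. bidual) unit balls implies that `T` is positive `(p₁,…,p_m;r)`-dominated
with `d⁺_{(p₁,…,p_m;r)}(T) ≤ C`. -/
theorem pietsch_domination_sufficiency
    {m : ℕ} {E : Fin m → Type*}
    [∀ j, NormedAddCommGroup (E j)] [∀ j, Lattice (E j)] [∀ j, HasSolidNorm (E j)]
    [∀ j, IsOrderedAddMonoid (E j)] [∀ j, NormedSpace ℝ (E j)]
    {F : Type*} [NormedAddCommGroup F] [Lattice F] [HasSolidNorm F] [IsOrderedAddMonoid F] [NormedSpace ℝ F]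
    (p r : ℝ) (pj : Fin m → ℝ) (hr : 1 ≤ r) (hpj : ∀ j, 1 ≤ pj j) (hp : 1 ≤ p)
    (hhol : 1 / p = (∑ j, 1 / pj j) + 1 / r)
    (T : ContinuousMultilinearMap ℝ E F) (C : ℝ) (hC : 0 < C)
    (μ : ∀ j, Measure (PosDualBall (E j))) [∀ j, IsProbabilityMeasure (μ j)]
    (ν : Measure (PosBidualBall F)) [IsProbabilityMeasure ν]
    (hdom : ∀ (x : ∀ j, E j) (φ : F →L[ℝ] ℝ),
      (∀ j, 0 ≤ x j) → (∀ z, 0 ≤ z → 0 ≤ φ z) →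
      |φ (T x)| ≤ C * (∏ j, (∫ ω : PosDualBall (E j), (ω.1 (x j)) ^ (pj j) ∂(μ j)) ^ (1 / pj j)) *
        (∫ ψ : PosBidualBall F, (ψ.1 φ) ^ r ∂ν) ^ (1 / r)) :
    ∀ (n : ℕ) (x : Fin n → ∀ j, E j) (y : Fin n → (F →L[ℝ] ℝ)),
      (∀ i j, 0 ≤ x i j) → (∀ i, ∀ z, 0 ≤ z → 0 ≤ y i z) →
      (∑ i, |y i (T (x i))| ^ p) ^ (1 / p) ≤
        C * (∏ j, wnormPos (pj j) (fun i => x i j)) * wnormDualPos r y := by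
  intro n x y hx hy
  have hp0 : 0 < p := zero_lt_one.trans_le hp
  have hr0 : 0 < r := zero_lt_one.trans_le hr
  have hpj0 : ∀ j, 0 < pj j := fun j => zero_lt_one.trans_le (hpj j)
  set W : Fin m → ℝ := fun j => wnormPos (pj j) (fun i => x i j) with hWdef
  set V : ℝ := wnormDualPos r y with hVdef
  have hWnn : ∀ j, 0 ≤ W j := fun j => wnormPos_nonneg (hpj0 j) (fun i => hx i j)
  have hVnn : 0 ≤ V := wnormDualPos_nonneg hr0 hy
  set A : Fin m → Fin n → ℝ :=
    fun j i => ∫ ω : PosDualBall (E j), (ω.1 (x i j)) ^ (pj j) ∂(μ j) with hAdef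
  set B : Fin n → ℝ := fun i => ∫ ψ : PosBidualBall F, (ψ.1 (y i)) ^ r ∂ν with hBdef
  have hAnn : ∀ j i, 0 ≤ A j i := fun j i =>
    integral_nonneg fun ω => Real.rpow_nonneg (ω.2.2 _ (hx i j)) _
  have hBnn : ∀ i, 0 ≤ B i := fun i =>
    integral_nonneg fun ψ => Real.rpow_nonneg (ψ.2.2 _ (hy i)) _
  -- the Hölder data
  set t : Fin (m + 1) → ℝ := Fin.snoc (fun j => p / pj j) (p / r) with htdef
  set f : Fin (m + 1) → Fin n → ℝ := Fin.snoc A B with hfdef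
  have ht : ∀ k, 0 < t k := by
    intro k
    refine Fin.lastCases ?_ ?_ k <;> simp [htdef]
    · exact div_pos hp0 hr0
    · exact fun j => div_pos hp0 (hpj0 j)
  have hts : ∑ k, t k = 1 := by
    rw [Fin.sum_univ_castSucc]
    simp only [htdef, Fin.snoc_castSucc, Fin.snoc_last]
    have : ∀ j : Fin m, p / pj j = p * (1 / pj j) := fun j => by ring
    rw [Finset.sum_congr rfl fun j _ => this j, ← Finset.mul_sum]
    have : p * (∑ j, 1 / pj j) + p / r = p * ((∑ j, 1 / pj j) + 1 / r) := by ring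
    rw [this, ← hhol, mul_one_div, div_self hp0.ne']
  have hf : ∀ k i, 0 ≤ f k i := by
    intro k i
    refine Fin.lastCases ?_ ?_ k <;> simp [hfdef]
    · exact hBnn i
    · exact fun j => hAnn j i
  -- Step 1: pointwise bound
  have step1 : ∀ i, |y i (T (x i))| ^ p ≤ C ^ p * ∏ k, (f k i) ^ (t k) := by
    intro i
    have h : |y i (T (x i))| ≤ C * (∏ j, (A j i) ^ (1 / pj j)) * (B i) ^ (1 / r) :=
      hdom (x i) (y i) (hx i) (hy i)
    have h2 := Real.rpow_le_rpow (abs_nonneg _) h hp0.le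
    refine h2.trans (le_of_eq ?_)
    have hprodnn : 0 ≤ ∏ j, (A j i) ^ (1 / pj j) :=
      Finset.prod_nonneg fun j _ => Real.rpow_nonneg (hAnn j i) _
    rw [Real.mul_rpow (mul_nonneg hC.le hprodnn) (Real.rpow_nonneg (hBnn i) _),
      Real.mul_rpow hC.le hprodnn]
    rw [← Real.finset_prod_rpow _ _ (fun j _ => Real.rpow_nonneg (hAnn j i) _)]
    rw [mul_assoc]
    congr 1
    rw [Fin.prod_univ_castSucc]
    simp only [hfdef, htdef, Fin.snoc_castSucc, Fin.snoc_last]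
    congr 1
    · refine Finset.prod_congr rfl fun j _ => ?_
      rw [← Real.rpow_mul (hAnn j i), one_div_mul_eq_div]
    · rw [← Real.rpow_mul (hBnn i), one_div_mul_eq_div]
  -- Step 2: Hölder
  have step2 : ∑ i, |y i (T (x i))| ^ p ≤ C ^ p * ∏ k, (∑ i, f k i) ^ (t k) := by
    calc ∑ i, |y i (T (x i))| ^ p ≤ ∑ i, C ^ p * ∏ k, (f k i) ^ (t k) :=
          Finset.sum_le_sum fun i _ => step1 i
      _ = C ^ p * ∑ i, ∏ k, (f k i) ^ (t k) := by rw [← Finset.mul_sum]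
      _ ≤ C ^ p * ∏ k, (∑ i, f k i) ^ (t k) :=
          mul_le_mul_of_nonneg_left (holder_prod_aux t ht hts f hf)
            (Real.rpow_nonneg hC.le _)
  -- Step 3: bound the Hölder factors by the weak norms
  have step3 : ∏ k, (∑ i, f k i) ^ (t k) ≤ (∏ j, W j ^ p) * V ^ p := by
    rw [Fin.prod_univ_castSucc]
    simp only [hfdef, htdef, Fin.snoc_castSucc, Fin.snoc_last]
    have hB' : (∑ i, B i) ^ (p / r) ≤ V ^ p := by
      have hsum : ∑ i, B i ≤ V ^ r := sum_integral_le_wnormDualPos hr0 hy ν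
      have h1 := Real.rpow_le_rpow (Finset.sum_nonneg fun i _ => hBnn i) hsum
        (div_pos hp0 hr0).le
      refine h1.trans (le_of_eq ?_)
      rw [← Real.rpow_mul hVnn]
      congr 1
      field_simp
    have hA' : ∀ j, (∑ i, A j i) ^ (p / pj j) ≤ W j ^ p := by
      intro j
      have hsum : ∑ i, A j i ≤ W j ^ pj j :=
        sum_integral_le_wnormPos (hpj0 j) (fun i => hx i j) (μ j)
      have h1 := Real.rpow_le_rpow (Finset.sum_nonneg fun i _ => hAnn j i) hsum
        (div_pos hp0 (hpj0 j)).le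
      refine h1.trans (le_of_eq ?_)
      rw [← Real.rpow_mul (hWnn j)]
      congr 1
      field_simp
      exact div_self (hpj0 j).ne'
    refine mul_le_mul (Finset.prod_le_prod (fun j _ =>
        Real.rpow_nonneg (Finset.sum_nonneg fun i _ => hAnn j i) _) (fun j _ => hA' j))
      hB' (Real.rpow_nonneg (Finset.sum_nonneg fun i _ => hBnn i) _)
      (Finset.prod_nonneg fun j _ => Real.rpow_nonneg (hWnn j) _)
  -- Conclusion
  have hXnn : 0 ≤ C * (∏ j, W j) * V :=
    mul_nonneg (mul_nonneg hC.le (Finset.prod_nonneg fun j _ => hWnn j)) hVnn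
  have hrhs : C ^ p * ((∏ j, W j ^ p) * V ^ p) = (C * (∏ j, W j) * V) ^ p := by
    rw [Real.mul_rpow (mul_nonneg hC.le (Finset.prod_nonneg fun j _ => hWnn j)) hVnn,
      Real.mul_rpow hC.le (Finset.prod_nonneg fun j _ => hWnn j),
      ← Real.finset_prod_rpow _ _ (fun j _ => hWnn j), mul_assoc]
  have hfinal : ∑ i, |y i (T (x i))| ^ p ≤ (C * (∏ j, W j) * V) ^ p := by
    rw [← hrhs]
    exact step2.trans (mul_le_mul_of_nonneg_left step3 (Real.rpow_nonneg hC.le _))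
  have hsumnn : 0 ≤ ∑ i, |y i (T (x i))| ^ p :=
    Finset.sum_nonneg fun i _ => Real.rpow_nonneg (abs_nonneg _) _
  have hlast := Real.rpow_le_rpow hsumnn hfinal (one_div_nonneg.mpr hp0.le)
  rwa [← Real.rpow_mul hXnn, mul_one_div, div_self hp0.ne', Real.rpow_one] at hlast
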